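/- In any 3-associative IP loop (in particular, any ARIF loop), (x⁻¹·(y·x))ⁿ = x⁻¹·(yⁿ·x) for all x, y and all integers n. -/

import Mathlib

/-- A loop: a magma with two-sided identity and left/right division. -/
class Loop (M : Type*) extends Mul M, One M where
  ld : M → M → M
  rd : M → M → M
  mul_ld : ∀ x y : M, x * ld x y = y
  ld_mul : ∀ x y : M, ld x (x * y) = y
  rd_mul : ∀ x y : M, rd y x * x = y
  mul_rd : ∀ x y : M, rd (y * x) x = y
  one_mul : ∀ x : M, 1 * x = x
  mul_one : ∀ x : M, x * 1 = x

/-- An inverse property (IP) loop. -/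
class IPLoop (M : Type*) extends Loop M, Inv M where
  inv_mul_cancel_left : ∀ x y : M, x⁻¹ * (x * y) = y
  mul_inv_cancel_right : ∀ x y : M, (y * x) * x⁻¹ = y

/-- Left translation `L(x) : y ↦ x * y` as a permutation. -/
def Loop.Lperm {M : Type*} [Loop M] (x : M) : Equiv.Perm M :=
  ⟨fun y => x * y, fun y => Loop.ld x y, Loop.ld_mul x, Loop.mul_ld x⟩

/-- Right translation `R(x) : y ↦ y * x` as a permutation. -/
def Loop.Rperm {M : Type*} [Loop M] (x : M) : Equiv.Perm M :=
  ⟨fun y => y * x, fun y => Loop.rd y x, fun y => Loop.mul_rd x y, fun y => Loop.rd_mul x y⟩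

/-- Integer powers: `xⁿ = 1 · L(x)ⁿ`. -/
def Loop.pow {M : Type*} [Loop M] (x : M) (n : ℤ) : M := (Loop.Lperm x ^ n) 1

/-- The set of all products of the word `W` under all bracketings. -/
inductive Loop.Prods {M : Type*} [Loop M] : List M → M → Prop
  | nil : Loop.Prods [] 1
  | single (x : M) : Loop.Prods [x] x
  | mul {V₁ V₂ : List M} {p q : M} : V₁ ≠ [] → V₂ ≠ [] →
      Loop.Prods V₁ p → Loop.Prods V₂ q → Loop.Prods (V₁ ++ V₂) (p * q)

open Classical in
/-- The number of alternating blocks of a word. -/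
noncomputable def Loop.blocks {M : Type*} [Inv M] : List M → ℕ
  | [] => 0
  | [_] => 1
  | x :: y :: t =>
      (if x = y ∨ x = y⁻¹ then 0 else 1) + Loop.blocks (y :: t)

namespace TA
variable {M : Type*} [IPLoop M]

lemma inv_mul (x : M) : x⁻¹ * x = 1 := by
  have h := IPLoop.inv_mul_cancel_left x (1 : M)
  rwa [Loop.mul_one] at h

lemma mul_inv (x : M) : x * x⁻¹ = 1 := by
  have h := IPLoop.mul_inv_cancel_right x (1 : M)
  rwa [Loop.one_mul] at h

lemma inv_inv (x : M) : x⁻¹⁻¹ = x := by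
  have h := IPLoop.mul_inv_cancel_right x⁻¹ x
  rwa [mul_inv, Loop.one_mul] at h

lemma inv_mul_cancel_left' (x w : M) : x * (x⁻¹ * w) = w := by
  have h := IPLoop.inv_mul_cancel_left x⁻¹ w
  rwa [inv_inv] at h

lemma mul_inv_cancel_right' (x w : M) : (w * x⁻¹) * x = w := by
  have h := IPLoop.mul_inv_cancel_right x⁻¹ w
  rwa [inv_inv] at h

lemma mul_inv_rev (p q : M) : (p * q)⁻¹ = q⁻¹ * p⁻¹ := by
  have h2 : p⁻¹ * (p * q) = q := IPLoop.inv_mul_cancel_left p q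
  have h3 : (p⁻¹ * (p * q)) * (p * q)⁻¹ = p⁻¹ := IPLoop.mul_inv_cancel_right (p * q) p⁻¹
  rw [h2] at h3
  have h4 : q⁻¹ * (q * (p * q)⁻¹) = (p * q)⁻¹ := IPLoop.inv_mul_cancel_left q _
  rw [h3] at h4
  exact h4.symm

lemma ld_eq (x w : M) : Loop.ld x w = x⁻¹ * w := by
  have h := Loop.ld_mul x (x⁻¹ * w)
  rwa [inv_mul_cancel_left'] at h

lemma Lperm_apply (x w : M) : Loop.Lperm x w = x * w := rfl

lemma Lperm_inv_apply (x w : M) : (Loop.Lperm x)⁻¹ w = x⁻¹ * w := by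
  show (Loop.Lperm x).symm w = x⁻¹ * w
  rw [show (Loop.Lperm x).symm w = Loop.ld x w from rfl, ld_eq]

lemma pow_zero' (u : M) : Loop.pow u 0 = 1 := by
  show (Loop.Lperm u ^ (0:ℤ)) 1 = 1
  rw [zpow_zero]; rfl

lemma pow_add_one' (u : M) (n : ℤ) : Loop.pow u (n + 1) = u * Loop.pow u n := by
  show (Loop.Lperm u ^ (n+1)) 1 = u * (Loop.Lperm u ^ n) 1
  rw [add_comm, zpow_add, zpow_one, Equiv.Perm.mul_apply, Lperm_apply]

lemma pow_sub_one' (u : M) (n : ℤ) : Loop.pow u (n - 1) = u⁻¹ * Loop.pow u n := by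
  show (Loop.Lperm u ^ (n-1)) 1 = u⁻¹ * (Loop.Lperm u ^ n) 1
  rw [sub_eq_neg_add, zpow_add, zpow_neg_one, Equiv.Perm.mul_apply, Lperm_inv_apply]


def np (u : M) (n : ℕ) : M := Loop.pow u (n : ℤ)

lemma np_zero (u : M) : np u 0 = 1 := by
  show Loop.pow u ((0:ℕ) : ℤ) = 1
  rw [Nat.cast_zero, pow_zero']

lemma np_succ (u : M) (n : ℕ) : np u (n+1) = u * np u n := by
  show Loop.pow u ((n+1:ℕ) : ℤ) = u * Loop.pow u (n : ℤ)
  push_cast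
  rw [pow_add_one']

lemma np_one (u : M) : np u 1 = u := by
  rw [show (1:ℕ) = 0 + 1 from rfl, np_succ, np_zero, Loop.mul_one]

lemma pow_neg_nat (u : M) : ∀ n : ℕ, Loop.pow u (-(n:ℤ)) = np u⁻¹ n
  | 0 => by rw [show (-((0:ℕ):ℤ)) = 0 by simp, pow_zero', np_zero]
  | (n+1) => by
      rw [show (-((n+1:ℕ):ℤ)) = -(n:ℤ) - 1 by push_cast; ring, pow_sub_one',
        pow_neg_nat u n, np_succ]

lemma prods_np (u : M) : ∀ n : ℕ, Loop.Prods (List.replicate n u) (np u n)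
  | 0 => by rw [np_zero]; exact .nil
  | 1 => by rw [np_one]; exact .single u
  | (n+2) => by
      rw [np_succ]
      exact .mul (by simp) (by simp) (.single u) (prods_np u (n+1))

lemma blocks_cons_le (x : M) (W : List M) :
    Loop.blocks (x :: W) ≤ 1 + Loop.blocks W := by
  cases W with
  | nil => simp [Loop.blocks]
  | cons y t =>
      simp only [Loop.blocks]
      split_ifs <;> omega

lemma blocks_cons_same (x : M) (W : List M) :
    Loop.blocks (x :: x :: W) = Loop.blocks (x :: W) := by
  simp [Loop.blocks]

lemma blocks_pair_inv (a : M) : Loop.blocks [a⁻¹, a] = 1 := by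
  simp [Loop.blocks]

lemma blocks_replicate_append (u : M) : ∀ (n : ℕ) (V : List M),
    Loop.blocks (List.replicate (n+1) u ++ V) = Loop.blocks (u :: V)
  | 0, V => rfl
  | (n+1), V => by
      show Loop.blocks (u :: u :: (List.replicate n u ++ V)) = _
      rw [blocks_cons_same]
      exact blocks_replicate_append u n V

lemma blocks_replicate (u : M) (n : ℕ) : Loop.blocks (List.replicate (n+1) u) = 1 := by
  have h := blocks_replicate_append u n []
  simpa [Loop.blocks] using h


/-- The 3-associativity hypothesis. -/
def H3 (M : Type*) [IPLoop M] : Prop :=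
  ∀ a b : M, ∀ W : List M,
    (∀ w ∈ W, w = a ∨ w = b ∨ w = a⁻¹ ∨ w = b⁻¹) → Loop.blocks W ≤ 3 →
    ∀ p q : M, Loop.Prods W p → Loop.Prods W q → p = q

/-- `u · vⁿ⁺¹ = (u·v) · vⁿ`. -/
lemma L1 {M : Type*} [IPLoop M] (h3 : H3 M) (u v : M) :
    ∀ n : ℕ, u * np v (n+1) = (u * v) * np v n
  | 0 => by rw [np_one, np_zero, Loop.mul_one]
  | (n+1) => by
      set W : List M := u :: v :: List.replicate (n+1) v with hW
      have hl1 : [u] ++ List.replicate (n+2) v = W := by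
        simp [hW, List.replicate_succ]
      have hl2 : ([u] ++ [v]) ++ List.replicate (n+1) v = W := by
        simp [hW]
      have P : Loop.Prods W (u * np v (n+2)) := by
        rw [← hl1]
        exact .mul (by simp) (by simp) (.single u) (prods_np v (n+2))
      have Q : Loop.Prods W ((u * v) * np v (n+1)) := by
        rw [← hl2]
        exact .mul (by simp) (by simp)
          (.mul (by simp) (by simp) (.single u) (.single v)) (prods_np v (n+1))
      have hw : ∀ w ∈ W, w = u ∨ w = v ∨ w = u⁻¹ ∨ w = v⁻¹ := by
        intro w hw
        simp only [hW, List.mem_cons, List.mem_replicate] at hw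
        tauto
      have hb : Loop.blocks W ≤ 3 := by
        rw [hW]
        have h1 := blocks_cons_le u (v :: List.replicate (n+1) v)
        have h2 : Loop.blocks (v :: List.replicate (n+1) v) = 1 := by
          have := blocks_replicate v (n+1)
          rwa [List.replicate_succ] at this
        omega
      exact h3 u v W hw hb _ _ P Q

/-- `yⁿ · (y·x) = yⁿ⁺¹ · x`. -/
lemma L2 {M : Type*} [IPLoop M] (h3 : H3 M) (y x : M) :
    ∀ n : ℕ, np y n * (y * x) = np y (n+1) * x
  | 0 => by rw [np_zero, np_one, Loop.one_mul]
  | (n+1) => by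
      set W : List M := List.replicate (n+2) y ++ [x] with hW
      have hl1 : List.replicate (n+1) y ++ ([y] ++ [x]) = W := by
        rw [hW, List.replicate_succ' (n := n+1) (a := y), List.append_assoc]
      have P : Loop.Prods W (np y (n+1) * (y * x)) := by
        rw [← hl1]
        exact .mul (by simp) (by simp) (prods_np y (n+1))
          (.mul (by simp) (by simp) (.single y) (.single x))
      have Q : Loop.Prods W (np y (n+2) * x) :=
        .mul (by simp) (by simp) (prods_np y (n+2)) (.single x)
      have hw : ∀ w ∈ W, w = y ∨ w = x ∨ w = y⁻¹ ∨ w = x⁻¹ := by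
        intro w hw
        simp only [hW, List.mem_append, List.mem_cons, List.mem_replicate,
          List.not_mem_nil] at hw
        tauto
      have hb : Loop.blocks W ≤ 3 := by
        have h1 : Loop.blocks W = Loop.blocks (y :: [x]) := hW ▸
          blocks_replicate_append y (n+1) [x]
        have h2 := blocks_cons_le y ([x] : List M)
        have h3' : Loop.blocks ([x] : List M) = 1 := rfl
        omega
      exact h3 y x W hw hb _ _ P Q

/-- `(x⁻¹·(y·x))⁻¹ = x⁻¹·(y⁻¹·x)`. -/
lemma cinv {M : Type*} [IPLoop M] (h3 : H3 M) (x y : M) :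
    (x⁻¹ * (y * x))⁻¹ = x⁻¹ * (y⁻¹ * x) := by
  rw [mul_inv_rev, mul_inv_rev, inv_inv]
  have P : Loop.Prods [x⁻¹, y⁻¹, x] ((x⁻¹ * y⁻¹) * x) :=
    .mul (V₁ := [x⁻¹, y⁻¹]) (V₂ := [x]) (by simp) (by simp)
      (.mul (by simp) (by simp) (.single x⁻¹) (.single y⁻¹)) (.single x)
  have Q : Loop.Prods [x⁻¹, y⁻¹, x] (x⁻¹ * (y⁻¹ * x)) :=
    .mul (V₁ := [x⁻¹]) (V₂ := [y⁻¹, x]) (by simp) (by simp)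
      (.single x⁻¹) (.mul (by simp) (by simp) (.single y⁻¹) (.single x))
  have hw : ∀ w ∈ ([x⁻¹, y⁻¹, x] : List M), w = x ∨ w = y ∨ w = x⁻¹ ∨ w = y⁻¹ := by
    intro w hw
    simp only [List.mem_cons, List.not_mem_nil] at hw
    tauto
  have hb : Loop.blocks ([x⁻¹, y⁻¹, x] : List M) ≤ 3 := by
    have h1 := blocks_cons_le x⁻¹ ([y⁻¹, x] : List M)
    have h2 := blocks_cons_le y⁻¹ ([x] : List M)
    have h3' : Loop.blocks ([x] : List M) = 1 := rfl
    omega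
  exact h3 x y _ hw hb _ _ P Q


/-- Main natural-number statement: `(x⁻¹·(y·x))ⁿ = x⁻¹·(yⁿ·x)`. -/
lemma SN {M : Type*} [IPLoop M] (h3 : H3 M) :
    ∀ n : ℕ, ∀ x y : M, np (x⁻¹ * (y * x)) n = x⁻¹ * (np y n * x) := by
  intro n
  induction n with
  | zero =>
      intro x y
      rw [np_zero, np_zero, Loop.one_mul, inv_mul]
  | succ n IH =>
      -- Generalized flexibility T(n): `(a·b)ⁿ·a = a·(b·a)ⁿ`.
      have T : ∀ a b : M, np (a * b) n * a = a * np (b * a) n := by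
        intro a b
        cases n with
        | zero => rw [np_zero, np_zero, Loop.one_mul, Loop.mul_one]
        | succ k =>
            have e1 : np (a * b) (k+1) = a * (np (b * a) (k+1) * a⁻¹) := by
              have h := IH a⁻¹ (b * a)
              rwa [inv_inv, IPLoop.mul_inv_cancel_right] at h
            set p : M := b * a with hp
            set W : List M := a :: (List.replicate (k+1) p ++ [a⁻¹, a]) with hW
            have hl1 : ([a] ++ (List.replicate (k+1) p ++ [a⁻¹])) ++ [a] = W := by
              simp [hW]
            have hl2 : [a] ++ (List.replicate (k+1) p ++ ([a⁻¹] ++ [a])) = W := by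
              simp [hW]
            have P : Loop.Prods W ((a * (np p (k+1) * a⁻¹)) * a) := by
              rw [← hl1]
              exact .mul (by simp) (by simp)
                (.mul (by simp) (by simp) (.single a)
                  (.mul (by simp) (by simp) (prods_np p (k+1)) (.single a⁻¹)))
                (.single a)
            have Q : Loop.Prods W (a * (np p (k+1) * (a⁻¹ * a))) := by
              rw [← hl2]
              exact .mul (by simp) (by simp) (.single a)
                (.mul (by simp) (by simp) (prods_np p (k+1))
                  (.mul (by simp) (by simp) (.single a⁻¹) (.single a)))
            have hw : ∀ w ∈ W, w = a ∨ w = p ∨ w = a⁻¹ ∨ w = p⁻¹ := by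
              intro w hw
              simp only [hW, List.mem_cons, List.mem_append, List.mem_replicate,
                List.not_mem_nil] at hw
              tauto
            have hb : Loop.blocks W ≤ 3 := by
              rw [hW]
              have h1 := blocks_cons_le a (List.replicate (k+1) p ++ [a⁻¹, a])
              have h2 : Loop.blocks (List.replicate (k+1) p ++ [a⁻¹, a])
                  = Loop.blocks (p :: [a⁻¹, a]) := blocks_replicate_append p k _
              have h3' := blocks_cons_le p ([a⁻¹, a] : List M)
              have h4 := blocks_pair_inv a
              omega
            have key := h3 a p W hw hb _ _ P Q
            rw [inv_mul, Loop.mul_one] at key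
            rw [e1, key]
      intro x y
      have hxc : x * (x⁻¹ * (y * x)) = y * x := inv_mul_cancel_left' x (y * x)
      set c : M := x⁻¹ * (y * x) with hc
      have e2 : x * np c (n+1) = (x * c) * np c n := L1 h3 x c n
      rw [hxc] at e2
      have e4 : np y n * (y * x) = (y * x) * np c n := by
        have h := T (y * x) x⁻¹
        rwa [IPLoop.mul_inv_cancel_right, ← hc] at h
      have e5 : np y n * (y * x) = np y (n+1) * x := L2 h3 y x n
      have e6 : x * np c (n+1) = np y (n+1) * x := by rw [e2, ← e4, e5]
      have e7 : x⁻¹ * (x * np c (n+1)) = np c (n+1) :=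
        IPLoop.inv_mul_cancel_left x _
      rw [e6] at e7
      exact e7.symm

end TA

/-- In any 3-associative IP loop, `(x⁻¹·(y·x))ⁿ = x⁻¹·(yⁿ·x)` for all integers `n`. -/
theorem three_assoc_conj_pow {M : Type*} [IPLoop M]
    (h3 : ∀ a b : M, ∀ W : List M,
      (∀ w ∈ W, w = a ∨ w = b ∨ w = a⁻¹ ∨ w = b⁻¹) → Loop.blocks W ≤ 3 →
      ∀ p q : M, Loop.Prods W p → Loop.Prods W q → p = q) :
    ∀ (x y : M) (n : ℤ),
      Loop.pow (x⁻¹ * (y * x)) n = x⁻¹ * (Loop.pow y n * x) := by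
  intro x y n
  have h3' : TA.H3 M := h3
  rcases Int.eq_nat_or_neg n with ⟨m, rfl | rfl⟩
  · exact TA.SN h3' m x y
  · rw [TA.pow_neg_nat _ m, TA.pow_neg_nat y m, TA.cinv h3' x y, TA.SN h3' m x y⁻¹]
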